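/- Let z be a natural number and k an integer with k ≤ z + 1, and set m = ⌊(z − k + 1)/2⌋ (a natural number). Then ∑_{l=0}^{z} (−1)^l C(z, l) · C(z+1, l + k) = (−1)^m · C(z, m). Moreover, if k ≥ z + 2 the left-hand side equals 0. -/

import Mathlib

/-- Binomial coefficient `C(m, a)` with an integer lower argument: it is `0`
unless `0 ≤ a`, and equals the usual binomial coefficient otherwise
(which is itself `0` when `a > m`). -/
def intChoose (m : ℕ) (a : ℤ) : ℤ := if 0 ≤ a then (m.choose a.toNat : ℤ) else 0

lemma intChoose_pascal (m : ℕ) (a : ℤ) :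
    intChoose (m+1) a = intChoose m a + intChoose m (a-1) := by
  unfold intChoose
  rcases lt_trichotomy a 0 with h | h | h
  · rw [if_neg (by omega), if_neg (by omega), if_neg (by omega)]; ring
  · subst h; norm_num
  · rw [if_pos (by omega), if_pos (by omega), if_pos (by omega)]
    have h1 : a.toNat = (a-1).toNat + 1 := by omega
    rw [h1, Nat.choose_succ_succ]
    push_cast; ring

lemma finDiff (n : ℕ) (g : ℕ → ℤ) :
    ∑ l ∈ Finset.range (n+2), (-1:ℤ)^l * ((n+1).choose l : ℤ) * g l
      = ∑ l ∈ Finset.range (n+1), (-1:ℤ)^l * (n.choose l : ℤ) * (g l - g (l+1)) := by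
  have hB : ∑ l ∈ Finset.range (n+1), (-1:ℤ)^(l+1) * (n.choose (l+1) : ℤ) * g (l+1)
      = -(∑ l ∈ Finset.range (n+1), (-1:ℤ)^l * (n.choose l : ℤ) * g l) + g 0
        + ∑ l ∈ Finset.range (n+1), (-1:ℤ)^l * (n.choose l : ℤ) * g l
        + ∑ l ∈ Finset.range (n+1), (-1:ℤ)^(l+1) * (n.choose (l+1) : ℤ) * g (l+1) - g 0 := by
    ring
  have h1 := Finset.sum_range_succ' (fun l => (-1:ℤ)^l * ((n+1).choose l : ℤ) * g l) (n+1)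
  have h2 := Finset.sum_range_succ' (fun l => (-1:ℤ)^l * (n.choose l : ℤ) * g l) (n+1)
  have h3 := Finset.sum_range_succ (fun l => (-1:ℤ)^l * (n.choose l : ℤ) * g l) (n+1)
  simp only [pow_zero, Nat.choose_zero_right, Nat.cast_one, one_mul, Nat.choose_succ_self,
    Nat.cast_zero, mul_zero, zero_mul, add_zero] at h1 h2 h3
  -- h1 : ∑ range(n+2) F = ∑ range(n+1) F(l+1) + g 0   (F with choose (n+1))
  -- h3 : ∑ range(n+2) f = ∑ range(n+1) f                (f with choose n, top term 0)
  -- h2 : ∑ range(n+2) f = ∑ range(n+1) f(l+1) + g 0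
  rw [h1]
  have hsplit : ∑ l ∈ Finset.range (n+1), (-1:ℤ)^(l+1) * ((n+1).choose (l+1) : ℤ) * g (l+1)
      = ∑ l ∈ Finset.range (n+1), (-((-1:ℤ)^l * (n.choose l : ℤ) * g (l+1))
          + (-1:ℤ)^(l+1) * (n.choose (l+1) : ℤ) * g (l+1)) := by
    apply Finset.sum_congr rfl
    intro l _
    rw [Nat.choose_succ_succ]
    push_cast; ring
  rw [hsplit, Finset.sum_add_distrib, Finset.sum_neg_distrib]
  have hRHS : ∑ l ∈ Finset.range (n+1), (-1:ℤ)^l * (n.choose l : ℤ) * (g l - g (l+1))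
      = ∑ l ∈ Finset.range (n+1), (-1:ℤ)^l * (n.choose l : ℤ) * g l
        - ∑ l ∈ Finset.range (n+1), (-1:ℤ)^l * (n.choose l : ℤ) * g (l+1) := by
    rw [← Finset.sum_sub_distrib]
    apply Finset.sum_congr rfl
    intro l _; ring
  rw [hRHS]
  have hb : ∑ l ∈ Finset.range (n+1), (-1:ℤ)^(l+1) * ((n:ℕ).choose (l+1) : ℤ) * g (l+1)
      = ∑ l ∈ Finset.range (n+1), (-1:ℤ)^l * (n.choose l : ℤ) * g l - g 0 := by
    linarith [h2, h3]
  linear_combination hb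

noncomputable def F (z : ℕ) (k : ℤ) : ℤ :=
  if k ≤ (z:ℤ)+1 then
    (-1:ℤ)^(((z:ℤ)-k+1).toNat/2) * (z.choose (((z:ℤ)-k+1).toNat/2) : ℤ)
  else 0

lemma F_rec (z : ℕ) (k : ℤ) : F (z+1) k = F z (k-1) - F z (k+1) := by
  unfold F
  push_cast
  rcases le_or_gt k (z:ℤ) with h | h
  · rw [if_pos (by omega), if_pos (by omega), if_pos (by omega)]
    obtain ⟨t, ht⟩ : ∃ t : ℕ, (z:ℤ) - k = t := ⟨((z:ℤ)-k).toNat, by omega⟩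
    have e1 : ((z:ℤ)+1-k+1).toNat = t + 2 := by omega
    have e2 : ((z:ℤ)-(k-1)+1).toNat = t + 2 := by omega
    have e3 : ((z:ℤ)-(k+1)+1).toNat = t := by omega
    rw [e1, e2, e3]
    have e4 : (t+2)/2 = t/2 + 1 := by omega
    rw [e4, Nat.choose_succ_succ z (t/2)]
    push_cast; ring
  · rcases lt_trichotomy k ((z:ℤ)+2) with h2 | h2 | h2
    · -- k = z+1
      have hk : k = (z:ℤ)+1 := by omega
      subst hk
      rw [if_pos (by omega), if_pos (by omega), if_neg (by omega)]
      have e1 : ((z:ℤ)+1-((z:ℤ)+1)+1).toNat = 1 := by omega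
      have e2 : ((z:ℤ)-((z:ℤ)+1-1)+1).toNat = 1 := by omega
      rw [e1, e2]
      norm_num
    · -- k = z+2
      subst h2
      rw [if_pos (by omega), if_pos (by omega), if_neg (by omega)]
      have e1 : ((z:ℤ)+1-((z:ℤ)+2)+1).toNat = 0 := by omega
      have e2 : ((z:ℤ)-((z:ℤ)+2-1)+1).toNat = 0 := by omega
      rw [e1, e2]
      norm_num
    · rw [if_neg (by omega), if_neg (by omega), if_neg (by omega)]; ring

lemma main_id (z : ℕ) : ∀ k : ℤ,
    ∑ l ∈ Finset.range (z + 1),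
        (-1 : ℤ) ^ l * (z.choose l : ℤ) * intChoose (z + 1) ((l : ℤ) + k) = F z k := by
  induction z with
  | zero =>
    intro k
    rw [Finset.sum_range_one]
    simp only [pow_zero, Nat.choose_zero_right, Nat.cast_one, one_mul, Nat.cast_zero, zero_add]
    unfold F intChoose
    rcases lt_trichotomy k 0 with h | h | h
    · rw [if_neg (by omega), if_pos (by omega)]
      have hm : 1 ≤ ((0:ℤ) - k + 1).toNat / 2 := by omega
      rw [Nat.choose_eq_zero_of_lt (by omega)]
      norm_num
    · subst h; norm_num
    · rcases lt_trichotomy k 2 with h2 | h2 | h2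
      · have hk : k = 1 := by omega
        subst hk; norm_num
      · subst h2; norm_num; decide
      · rw [if_pos (by omega), if_neg (by omega)]
        rw [Nat.choose_eq_zero_of_lt (by omega)]
        norm_num
  | succ z ih =>
    intro k
    have key : ∑ l ∈ Finset.range (z + 1 + 1),
        (-1 : ℤ) ^ l * ((z+1).choose l : ℤ) * intChoose (z + 1 + 1) ((l : ℤ) + k)
        = ∑ l ∈ Finset.range (z + 1),
            (-1 : ℤ) ^ l * (z.choose l : ℤ) * intChoose (z + 1) ((l : ℤ) + (k-1))
          - ∑ l ∈ Finset.range (z + 1),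
            (-1 : ℤ) ^ l * (z.choose l : ℤ) * intChoose (z + 1) ((l : ℤ) + (k+1)) := by
      rw [show z + 1 + 1 = z + 2 from rfl,
        finDiff z (fun l => intChoose (z+2) ((l:ℤ)+k)), ← Finset.sum_sub_distrib]
      apply Finset.sum_congr rfl
      intro l _
      have h1 : intChoose (z+1+1) ((l:ℤ)+k)
          = intChoose (z+1) ((l:ℤ)+k) + intChoose (z+1) ((l:ℤ)+(k-1)) := by
        rw [intChoose_pascal, show (l:ℤ)+k-1 = (l:ℤ)+(k-1) from by ring]
      have h2 : intChoose (z+1+1) (((l+1:ℕ):ℤ)+k)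
          = intChoose (z+1) ((l:ℤ)+(k+1)) + intChoose (z+1) ((l:ℤ)+k) := by
        rw [intChoose_pascal, show ((l+1:ℕ):ℤ)+k = (l:ℤ)+(k+1) from by push_cast; ring,
          show (l:ℤ)+(k+1)-1 = (l:ℤ)+k from by ring]
      simp only [show z + 2 = z + 1 + 1 from rfl] at *
      rw [h1, h2]
      ring
    rw [key, ih (k-1), ih (k+1), F_rec]

theorem stmt_3 (z : ℕ) (k : ℤ) :
    (k ≤ (z : ℤ) + 1 →
      ∑ l ∈ Finset.range (z + 1),
          (-1 : ℤ) ^ l * (z.choose l : ℤ) * intChoose (z + 1) ((l : ℤ) + k)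
        = (-1 : ℤ) ^ (((z : ℤ) - k + 1).toNat / 2)
            * (z.choose (((z : ℤ) - k + 1).toNat / 2) : ℤ)) ∧
    ((z : ℤ) + 2 ≤ k →
      ∑ l ∈ Finset.range (z + 1),
          (-1 : ℤ) ^ l * (z.choose l : ℤ) * intChoose (z + 1) ((l : ℤ) + k) = 0) := by
  constructor
  · intro hk
    rw [main_id z k]
    unfold F
    rw [if_pos hk]
  · intro hk
    rw [main_id z k]
    unfold F
    rw [if_neg (by omega)]
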